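/- Let m ≥ 1, let a ∈ ℝ with a ≠ 0, a ≠ 1 and a ≠ −1, and let j be an integer with 1 ≤ j ≤ m−1. Then ∑_{n=0}^{m−1} X_n(a)·X_{(n+j) mod m}(1/a) = 0, where the index (n+j) mod m is taken in {0,…,m−1}. -/

import Mathlib

open Finset

namespace FZaux
open Polynomial

variable {m : ℕ} {q : ℂ}

lemma prodA (hm : 0 < m) (hq : IsPrimitiveRoot q m) (x : ℂ) :
    ∏ i ∈ range m, (x - q ^ i) = x ^ m - 1 := by
  have himg : (range m).image (fun i => q ^ i) = Polynomial.nthRootsFinset m (1 : ℂ) := by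
    apply Finset.eq_of_subset_of_card_le
    · intro z hz
      simp only [Finset.mem_image] at hz
      obtain ⟨i, _, rfl⟩ := hz
      rw [Polynomial.mem_nthRootsFinset hm, ← pow_mul, mul_comm, pow_mul, hq.pow_eq_one, one_pow]
    · rw [hq.card_nthRootsFinset, Finset.card_image_of_injOn hq.injOn_pow, card_range]
  have h1 := congrArg (Polynomial.eval x) (Polynomial.X_pow_sub_one_eq_prod hm hq)
  simp only [eval_sub, eval_pow, eval_X, eval_one, eval_prod, eval_C] at h1
  rw [h1, ← himg, Finset.prod_image]
  intro i hi k hk h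
  exact hq.pow_inj (mem_range.mp hi) (mem_range.mp hk) h

lemma derivA (hm : 0 < m) (hq : IsPrimitiveRoot q m) (x : ℂ) :
    ∑ n ∈ range m, ∏ i ∈ (range m).erase n, (x - q ^ i) = m * x ^ (m - 1) := by
  have hP : (∏ i ∈ range m, (Polynomial.X - Polynomial.C (q ^ i)))
      = Polynomial.X ^ m - Polynomial.C 1 := by
    apply Polynomial.funext
    intro r
    simp only [eval_prod, eval_sub, eval_X, eval_C, eval_pow, eval_one]
    exact prodA hm hq r
  have hD0 : Polynomial.derivative (∏ i ∈ range m, (Polynomial.X - Polynomial.C (q ^ i)))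
      = ∑ i ∈ range m, ∏ j ∈ (range m).erase i, (Polynomial.X - Polynomial.C (q ^ j)) := by
    rw [Finset.prod_eq_multiset_prod, Polynomial.derivative_prod, Finset.sum_eq_multiset_sum]
    congr 1
    apply Multiset.map_congr rfl
    intro i hi
    rw [Polynomial.derivative_sub, Polynomial.derivative_X, Polynomial.derivative_C, sub_zero,
      mul_one, ← Finset.erase_val, ← Finset.prod_eq_multiset_prod]
  have hD := congrArg Polynomial.derivative hP
  rw [hD0] at hD
  simp only [Polynomial.derivative_sub, Polynomial.derivative_one, Polynomial.derivative_C,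
    Polynomial.derivative_X_pow, sub_zero] at hD
  have h2 := congrArg (Polynomial.eval x) hD
  simpa [Polynomial.eval_finset_sum, eval_prod] using h2

lemma sumB (hm : 0 < m) (hq : IsPrimitiveRoot q m) {b : ℂ} (hb0 : b ≠ 0) :
    ∑ n ∈ range m, ∏ i ∈ (range m).erase n, (1 - b * q ^ i) = m := by
  have key : ∀ n ∈ range m, ∏ i ∈ (range m).erase n, (1 - b * q ^ i)
      = b ^ (m - 1) * ∏ i ∈ (range m).erase n, (b⁻¹ - q ^ i) := by
    intro n hn
    have h1 : ∀ i ∈ (range m).erase n, (1 - b * q ^ i) = b * (b⁻¹ - q ^ i) := by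
      intro i _
      field_simp
    rw [Finset.prod_congr rfl h1, Finset.prod_mul_distrib, Finset.prod_const,
      Finset.card_erase_of_mem hn, card_range]
  rw [Finset.sum_congr rfl key, ← Finset.mul_sum, derivA hm hq b⁻¹]
  rw [← mul_assoc, mul_comm (b ^ (m-1)) (m:ℂ), mul_assoc, ← mul_pow, mul_inv_cancel₀ hb0,
    one_pow, mul_one]

lemma sumA (hm : 0 < m) (hq : IsPrimitiveRoot q m) {b : ℂ} (hb0 : b ≠ 0) (hbm : b ^ m ≠ 1) :
    ∑ n ∈ range m, 1 / (1 - b * q ^ n) = m / (1 - b ^ m) := by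
  have hbm1 : (1:ℂ) - b ^ m ≠ 0 := sub_ne_zero.mpr (Ne.symm hbm)
  have hprodB : ∏ i ∈ range m, (1 - b * q ^ i) = 1 - b ^ m := by
    have h1 : ∀ i ∈ range m, (1 - b * q ^ i) = b * (b⁻¹ - q ^ i) := by
      intro i _; field_simp
    rw [Finset.prod_congr rfl h1, Finset.prod_mul_distrib, Finset.prod_const, card_range,
      prodA hm hq, mul_sub, ← mul_pow, mul_inv_cancel₀ hb0, one_pow, mul_one]
  have hnz : ∀ n : ℕ, 1 - b * q ^ n ≠ 0 := by
    intro n h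
    apply hbm
    have h1 : b * q ^ n = 1 := by
      have := sub_eq_zero.mp h; exact this.symm
    have h2 := congrArg (· ^ m) h1
    simp only [mul_pow, one_pow] at h2
    rwa [← pow_mul, mul_comm n m, pow_mul, hq.pow_eq_one, one_pow, mul_one] at h2
  have hterm : ∀ n ∈ range m, 1 / (1 - b * q ^ n)
      = (∏ i ∈ (range m).erase n, (1 - b * q ^ i)) / (1 - b ^ m) := by
    intro n hn
    rw [div_eq_div_iff (hnz n) hbm1, one_mul, ← hprodB, ← Finset.mul_prod_erase _ _ hn]
    ring
  rw [Finset.sum_congr rfl hterm, ← Finset.sum_div, sumB hm hq hb0]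


lemma auxSum (m j : ℕ) (hm : 0 < m) (hj1 : 1 ≤ j) (hjm : j + 1 ≤ m)
    (q a : ℂ) (hq : IsPrimitiveRoot q m) (ha0 : a ≠ 0)
    (hK : ∀ k : ℕ, a * q ^ k - 1 ≠ 0) (ham : a ^ m - 1 ≠ 0) :
    ∑ n ∈ range m,
      (q ^ n * ∏ i ∈ range (j - 1), (q ^ (i + 1) * q ^ n - a)) /
        ∏ i ∈ range (j + 1), (a * q ^ i * q ^ n - 1) = 0 := by
  have hq1 : q ^ m = 1 := hq.pow_eq_one
  have hq0 : q ≠ 0 := by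
    intro h
    rw [h, zero_pow (by omega)] at hq1
    exact zero_ne_one hq1
  have haq : ∀ l : ℕ, a * q ^ l ≠ 0 := fun l => mul_ne_zero ha0 (pow_ne_zero _ hq0)
  have hdist : ∀ i l : ℕ, i < m → l < m → i ≠ l → a * q ^ i * (a * q ^ l)⁻¹ - 1 ≠ 0 := by
    intro i l hi hl hil h
    apply hil
    have h1 : a * q ^ i = a * q ^ l := by
      rw [sub_eq_zero, mul_inv_eq_one₀ (haq l)] at h
      exact h
    exact hq.pow_inj hi hl (mul_left_cancel₀ ha0 h1)
  have hdl : ∀ l ∈ range (j + 1),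
      (∏ i ∈ (range (j + 1)).erase l, (a * q ^ i * (a * q ^ l)⁻¹ - 1)) ≠ 0 := by
    intro l hl
    rw [Finset.prod_ne_zero_iff]
    intro i hi
    have hi1 := Finset.mem_of_mem_erase hi
    exact hdist i l (by have := mem_range.mp hi1; omega) (by have := mem_range.mp hl; omega)
      (Finset.ne_of_mem_erase hi)
  set w : ℕ → ℂ := fun l =>
    ((a * q ^ l)⁻¹ * ∏ i ∈ range (j - 1), (q ^ (i + 1) * (a * q ^ l)⁻¹ - a)) /
      ∏ i ∈ (range (j + 1)).erase l, (a * q ^ i * (a * q ^ l)⁻¹ - 1) with hw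
  -- the partial fraction identity
  have hPF : ∀ z : ℂ, z * ∏ i ∈ range (j - 1), (q ^ (i + 1) * z - a)
      = ∑ l ∈ range (j + 1), w l * ∏ i ∈ (range (j + 1)).erase l, (a * q ^ i * z - 1) := by
    set p : Polynomial ℂ :=
      (∑ l ∈ range (j + 1), Polynomial.C (w l) *
        ∏ i ∈ (range (j + 1)).erase l, (Polynomial.C (a * q ^ i) * Polynomial.X - 1))
      - Polynomial.X * ∏ i ∈ range (j - 1),
          (Polynomial.C (q ^ (i + 1)) * Polynomial.X - Polynomial.C a) with hp
    have hlin : ∀ c d : ℂ, (Polynomial.C c * Polynomial.X - Polynomial.C d).natDegree ≤ 1 := by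
      intro c d
      have : Polynomial.C c * Polynomial.X - Polynomial.C d
          = Polynomial.C c * Polynomial.X + Polynomial.C (-d) := by
        rw [map_neg]; ring
      rw [this]
      exact Polynomial.natDegree_linear_le
    have hdeg : p.natDegree < j + 1 := by
      have h1 : (∑ l ∈ range (j + 1), Polynomial.C (w l) *
          ∏ i ∈ (range (j + 1)).erase l,
            (Polynomial.C (a * q ^ i) * Polynomial.X - 1)).natDegree ≤ j := by
        apply Polynomial.natDegree_sum_le_of_forall_le
        intro l hl
        refine le_trans (Polynomial.natDegree_mul_le) ?_
        rw [Polynomial.natDegree_C, zero_add]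
        refine le_trans (Polynomial.natDegree_prod_le _ _) ?_
        refine le_trans (Finset.sum_le_card_nsmul _ _ 1 ?_) ?_
        · intro i _
          have : (1 : Polynomial ℂ) = Polynomial.C 1 := by simp
          rw [this]
          exact hlin _ _
        · rw [Finset.card_erase_of_mem hl, card_range]
          simp
      have h2 : (Polynomial.X * ∏ i ∈ range (j - 1),
          (Polynomial.C (q ^ (i + 1)) * Polynomial.X - Polynomial.C a)).natDegree ≤ j := by
        refine le_trans (Polynomial.natDegree_mul_le) ?_
        rw [Polynomial.natDegree_X]
        have h3 : (∏ i ∈ range (j - 1),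
            (Polynomial.C (q ^ (i + 1)) * Polynomial.X - Polynomial.C a)).natDegree ≤ j - 1 := by
          refine le_trans (Polynomial.natDegree_prod_le _ _) ?_
          refine le_trans (Finset.sum_le_card_nsmul _ _ 1 fun i _ => hlin _ _) ?_
          rw [card_range]; simp
        omega
      have h4 := le_trans (Polynomial.natDegree_sub_le _ _) (max_le h1 h2)
      rw [hp]
      omega
    have heval : ∀ r ∈ range (j + 1), p.eval ((a * q ^ r)⁻¹) = 0 := by
      intro r hr
      rw [hp]
      simp only [Polynomial.eval_sub, Polynomial.eval_finset_sum, Polynomial.eval_mul,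
        Polynomial.eval_prod, Polynomial.eval_C, Polynomial.eval_X, Polynomial.eval_sub,
        Polynomial.eval_one]
      rw [Finset.sum_eq_single r]
      · rw [hw, div_mul_cancel₀ _ (hdl r hr)]
        ring
      · intro l hl hlr
        apply mul_eq_zero_of_right
        apply Finset.prod_eq_zero (Finset.mem_erase.mpr ⟨Ne.symm hlr, hr⟩)
        rw [mul_inv_cancel₀ (haq r), sub_self]
      · intro h; exact absurd hr h
    have hp0 : p = 0 := by
      apply Polynomial.eq_zero_of_natDegree_lt_card_of_eval_eq_zero' p
        ((range (j + 1)).image (fun l => (a * q ^ l)⁻¹))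
      · intro x hx
        obtain ⟨r, hr, rfl⟩ := Finset.mem_image.mp hx
        exact heval r hr
      · rw [Finset.card_image_of_injOn]
        · rw [card_range]; exact hdeg
        · intro x hx y hy hxy
          simp only [coe_range, Set.mem_Iio] at hx hy
          apply hq.pow_inj (by omega) (by omega)
          apply mul_left_cancel₀ ha0
          exact inv_inj.mp hxy
    intro z
    have := congrArg (Polynomial.eval z) hp0
    rw [hp] at this
    simp only [Polynomial.eval_sub, Polynomial.eval_finset_sum, Polynomial.eval_mul,
      Polynomial.eval_prod, Polynomial.eval_C, Polynomial.eval_X, Polynomial.eval_one,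
      Polynomial.eval_zero] at this
    have h4 := sub_eq_zero.mp this
    exact h4.symm
  -- rewrite each summand via partial fractions
  have hterm : ∀ n ∈ range m,
      (q ^ n * ∏ i ∈ range (j - 1), (q ^ (i + 1) * q ^ n - a)) /
        ∏ i ∈ range (j + 1), (a * q ^ i * q ^ n - 1)
      = ∑ l ∈ range (j + 1), w l / (a * q ^ l * q ^ n - 1) := by
    intro n _
    rw [hPF (q ^ n), Finset.sum_div]
    apply Finset.sum_congr rfl
    intro l hl
    rw [← Finset.mul_prod_erase _ _ hl]
    rw [mul_div_mul_right]
    rw [Finset.prod_ne_zero_iff]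
    intro i hi
    have : a * q ^ i * q ^ n = a * q ^ (i + n) := by rw [pow_add]; ring
    rw [this]
    exact hK (i + n)
  rw [Finset.sum_congr rfl hterm, Finset.sum_comm]
  have hinner : ∀ l ∈ range (j + 1),
      ∑ n ∈ range m, w l / (a * q ^ l * q ^ n - 1) = w l * (-((m : ℂ) / (1 - a ^ m))) := by
    intro l _
    have hblm : (a * q ^ l) ^ m = a ^ m := by
      rw [mul_pow, ← pow_mul, mul_comm l m, pow_mul, hq1, one_pow, mul_one]
    have hsa := sumA hm hq (b := a * q ^ l) (haq l) (by rw [hblm]; exact sub_ne_zero.mp ham)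
    rw [hblm] at hsa
    have h5 : ∀ n ∈ range m, w l / (a * q ^ l * q ^ n - 1)
        = w l * -(1 / (1 - a * q ^ l * q ^ n)) := by
      intro n _
      rw [show a * q ^ l * q ^ n - 1 = -(1 - a * q ^ l * q ^ n) by ring, div_neg]
      rw [mul_neg, mul_one_div]
    rw [Finset.sum_congr rfl h5, ← Finset.mul_sum, Finset.sum_neg_distrib, hsa]
  rw [Finset.sum_congr rfl hinner, ← Finset.sum_mul]
  have hw0 : ∑ l ∈ range (j + 1), w l = 0 := by
    have h6 := hPF 0
    simp only [zero_mul, mul_zero, zero_sub] at h6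
    have h7 : ∀ l ∈ range (j + 1),
        w l * ∏ i ∈ (range (j + 1)).erase l, (-1 : ℂ) = w l * (-1) ^ j := by
      intro l hl
      rw [Finset.prod_const, Finset.card_erase_of_mem hl, card_range]
      simp
    rw [Finset.sum_congr rfl h7, ← Finset.sum_mul] at h6
    rcases mul_eq_zero.mp h6.symm with h | h
    · exact h
    · exact absurd h (pow_ne_zero _ (by norm_num))
  rw [hw0, zero_mul]

end FZaux

/-- `Q m = exp(πi/m)`. -/
noncomputable def Q (m : ℕ) : ℂ := Complex.exp (Real.pi * Complex.I / m)

/-- The Fateev–Zamolodchikov coefficients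
`X_j(a) = ∏_{k=0}^{j-1} (a·Q^k − Q^{−k})/(Q^{k+1} − a·Q^{−k−1})`. -/
noncomputable def X (m j : ℕ) (a : ℂ) : ℂ :=
  ∏ k ∈ Finset.range j,
    (a * Q m ^ k - Q m ^ (-(k : ℤ))) / (Q m ^ (k + 1) - a * Q m ^ (-((k : ℤ) + 1)))

namespace FZaux

lemma X_eq_prod_G (m : ℕ) (a : ℂ) (hζ0 : Q m ≠ 0)
    (hden : ∀ k : ℕ, (Q m ^ 2) ^ (k + 1) - a ≠ 0) (n : ℕ) :
    X m n a = ∏ k ∈ range n, (Q m * (a * (Q m ^ 2) ^ k - 1) / ((Q m ^ 2) ^ (k + 1) - a)) := by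
  simp only [X]
  apply Finset.prod_congr rfl
  intro k _
  have e1 : Q m ^ (-(k : ℤ)) = (Q m ^ k)⁻¹ := by rw [zpow_neg, zpow_natCast]
  have e2 : Q m ^ (-((k : ℤ) + 1)) = (Q m ^ (k + 1))⁻¹ := by
    rw [show -((k : ℤ) + 1) = -(((k + 1 : ℕ) : ℤ)) by push_cast; ring, zpow_neg, zpow_natCast]
  rw [e1, e2]
  have hv : Q m ^ k ≠ 0 := pow_ne_zero _ hζ0
  have hv1 : Q m ^ (k + 1) ≠ 0 := pow_ne_zero _ hζ0
  have e4 : (Q m ^ 2) ^ (k + 1) = Q m ^ (k + 1) * Q m ^ (k + 1) := by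
    rw [← pow_mul, two_mul, pow_add]
  have e3 : (Q m ^ 2) ^ k = Q m ^ k * Q m ^ k := by rw [← pow_mul, two_mul, pow_add]
  have hd := hden k
  rw [e4] at hd
  have hd2 : Q m ^ (k + 1) - a * (Q m ^ (k + 1))⁻¹ ≠ 0 := by
    intro h
    apply hd
    have h1 : Q m ^ (k + 1) = a * (Q m ^ (k + 1))⁻¹ := sub_eq_zero.mp h
    have h2 : Q m ^ (k + 1) * Q m ^ (k + 1) = a := by
      field_simp at h1
      linear_combination h1
    rw [h2, sub_self]
  rw [e3, e4]
  rw [pow_succ] at hd2 ⊢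
  have hv2 : Q m ^ k * Q m ≠ 0 := mul_ne_zero hv hζ0
  have hd3 : Q m ^ k * Q m * (Q m ^ k * Q m) - a ≠ 0 := by rw [← pow_succ]; rw [pow_succ]; exact hd
  field_simp

lemma X_eq_prod_H (m : ℕ) (a : ℂ) (ha0 : a ≠ 0) (hζ0 : Q m ≠ 0)
    (hden : ∀ k : ℕ, a * (Q m ^ 2) ^ (k + 1) - 1 ≠ 0) (n : ℕ) :
    X m n (1 / a) = ∏ k ∈ range n, (Q m * ((Q m ^ 2) ^ k - a) / (a * (Q m ^ 2) ^ (k + 1) - 1)) := by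
  simp only [X]
  apply Finset.prod_congr rfl
  intro k _
  have e1 : Q m ^ (-(k : ℤ)) = (Q m ^ k)⁻¹ := by rw [zpow_neg, zpow_natCast]
  have e2 : Q m ^ (-((k : ℤ) + 1)) = (Q m ^ (k + 1))⁻¹ := by
    rw [show -((k : ℤ) + 1) = -(((k + 1 : ℕ) : ℤ)) by push_cast; ring, zpow_neg, zpow_natCast]
  rw [e1, e2]
  have hv : Q m ^ k ≠ 0 := pow_ne_zero _ hζ0
  have hv1 : Q m ^ (k + 1) ≠ 0 := pow_ne_zero _ hζ0
  have e4 : (Q m ^ 2) ^ (k + 1) = Q m ^ (k + 1) * Q m ^ (k + 1) := by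
    rw [← pow_mul, two_mul, pow_add]
  have e3 : (Q m ^ 2) ^ k = Q m ^ k * Q m ^ k := by rw [← pow_mul, two_mul, pow_add]
  have hd := hden k
  rw [e4] at hd
  have hd2 : Q m ^ (k + 1) - 1 / a * (Q m ^ (k + 1))⁻¹ ≠ 0 := by
    intro h
    apply hd
    have h1 : Q m ^ (k + 1) = 1 / a * (Q m ^ (k + 1))⁻¹ := sub_eq_zero.mp h
    have h2 : a * (Q m ^ (k + 1) * Q m ^ (k + 1)) = 1 := by
      field_simp at h1
      linear_combination h1
    linear_combination h2
  rw [e3, e4, div_eq_div_iff hd2 hd]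
  rw [pow_succ]
  field_simp

end FZaux

/-- The off-diagonal unitarity sums vanish:
`∑_{n=0}^{m−1} X_n(a)·X_{(n+j) mod m}(1/a) = 0` for real `a ≠ 0, ±1` and `1 ≤ j ≤ m−1`. -/
theorem stmt6 (m : ℕ) (hm : 1 ≤ m) (a : ℝ) (ha0 : a ≠ 0) (ha1 : a ≠ 1) (ha2 : a ≠ -1)
    (j : ℕ) (hj1 : 1 ≤ j) (hj2 : j ≤ m - 1) :
    ∑ n ∈ Finset.range m, X m n (a : ℂ) * X m ((n + j) % m) (1 / (a : ℂ)) = 0 := by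
  have hm2 : 2 ≤ m := by omega
  have hjm : j + 1 ≤ m := by omega
  have hmC : (m : ℂ) ≠ 0 := Nat.cast_ne_zero.mpr (by omega)
  have hζm : Q m ^ m = -1 := by
    rw [Q, ← Complex.exp_nat_mul,
      show (m : ℂ) * (↑Real.pi * Complex.I / ↑m) = ↑Real.pi * Complex.I by
        field_simp [hmC],
      Complex.exp_pi_mul_I]
  have hζ0 : Q m ≠ 0 := Complex.exp_ne_zero _
  have hq : IsPrimitiveRoot (Q m ^ 2) m := by
    have h1 : Q m ^ 2 = Complex.exp (2 * ↑Real.pi * Complex.I / ↑m) := by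
      rw [Q, ← Complex.exp_nat_mul]
      congr 1
      push_cast
      ring
    rw [h1]
    exact Complex.isPrimitiveRoot_exp m (by omega)
  have habs : ‖(a : ℂ)‖ ≠ 1 := by
    rw [Complex.norm_real, Real.norm_eq_abs]
    intro h
    rcases (abs_eq zero_le_one).mp h with h' | h'
    · exact ha1 h'
    · exact ha2 h'
  have habsζ : ‖Q m‖ = 1 := by
    have h1 : ↑Real.pi * Complex.I / ↑m = ↑(Real.pi / m) * Complex.I := by
      push_cast; ring
    rw [Q, h1, Complex.norm_exp_ofReal_mul_I]
  have habsq : ∀ k : ℕ, ‖(Q m ^ 2) ^ k‖ = 1 := by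
    intro k; rw [norm_pow, norm_pow, habsζ, one_pow, one_pow]
  have hK : ∀ k : ℕ, (a : ℂ) * (Q m ^ 2) ^ k - 1 ≠ 0 := by
    intro k h
    apply habs
    have h1 : (a : ℂ) * (Q m ^ 2) ^ k = 1 := by rw [← sub_eq_zero]; exact h
    have h2 := congrArg norm h1
    rwa [norm_mul, habsq, mul_one, norm_one] at h2
  have hK' : ∀ k : ℕ, (Q m ^ 2) ^ k - (a : ℂ) ≠ 0 := by
    intro k h
    apply habs
    have h1 : (Q m ^ 2) ^ k = (a : ℂ) := sub_eq_zero.mp h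
    have h2 := congrArg norm h1
    rw [habsq] at h2
    exact h2.symm
  have ham : (a : ℂ) ^ m - 1 ≠ 0 := by
    intro h
    have h1 : (a : ℂ) ^ m = 1 := sub_eq_zero.mp h
    have h2 := congrArg norm h1
    rw [norm_pow, norm_one, Complex.norm_real, Real.norm_eq_abs] at h2
    rcases lt_trichotomy |a| 1 with h3 | h3 | h3
    · have h4 := pow_lt_one₀ (abs_nonneg a) h3 (n := m) (by omega)
      rw [h2] at h4; exact lt_irrefl 1 h4
    · exact habs (by rw [Complex.norm_real, Real.norm_eq_abs]; exact h3)
    · have h4 := one_lt_pow₀ h3 (n := m) (by omega)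
      rw [h2] at h4; exact lt_irrefl 1 h4
  have ha0' : (a : ℂ) ≠ 0 := Complex.ofReal_ne_zero.mpr ha0
  have haM1 : (a : ℂ) - 1 ≠ 0 := by
    have h := hK 0; rw [pow_zero, mul_one] at h; exact h
  have h1am : (1 : ℂ) - (a : ℂ) ^ m ≠ 0 := by
    intro h; apply ham
    rw [sub_eq_zero] at h ⊢; exact h.symm
  -- closed forms
  have hX1 : ∀ n : ℕ, X m n (a : ℂ)
      = ∏ k ∈ range n, (Q m * ((a : ℂ) * (Q m ^ 2) ^ k - 1) / ((Q m ^ 2) ^ (k + 1) - (a : ℂ))) :=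
    FZaux.X_eq_prod_G m (a : ℂ) hζ0 (fun k => hK' (k + 1))
  have hX2 : ∀ n : ℕ, X m n (1 / (a : ℂ))
      = ∏ k ∈ range n, (Q m * ((Q m ^ 2) ^ k - (a : ℂ)) / ((a : ℂ) * (Q m ^ 2) ^ (k + 1) - 1)) :=
    FZaux.X_eq_prod_H m (a : ℂ) ha0' hζ0 (fun k => hK (k + 1))
  set H : ℕ → ℂ := fun k => Q m * ((Q m ^ 2) ^ k - (a : ℂ)) / ((a : ℂ) * (Q m ^ 2) ^ (k + 1) - 1)
    with hHdef
  have hHper : ∀ k : ℕ, H (k + m) = H k := by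
    intro k
    rw [hHdef]
    simp only
    rw [show (Q m ^ 2) ^ (k + m) = (Q m ^ 2) ^ k by rw [pow_add, hq.pow_eq_one, mul_one],
      show k + m + 1 = (k + 1) + m by omega,
      show (Q m ^ 2) ^ ((k + 1) + m) = (Q m ^ 2) ^ (k + 1) by
        rw [pow_add, hq.pow_eq_one, mul_one]]
  have hXmm : ∏ k ∈ range m, H k = 1 := by
    rw [hHdef]
    rw [Finset.prod_div_distrib, Finset.prod_mul_distrib, Finset.prod_const, card_range]
    have hnum : ∏ k ∈ range m, ((Q m ^ 2) ^ k - (a : ℂ)) = (-1) ^ m * ((a : ℂ) ^ m - 1) := by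
      have h1 : ∀ k ∈ range m, ((Q m ^ 2) ^ k - (a : ℂ)) = (-1) * ((a : ℂ) - (Q m ^ 2) ^ k) := by
        intro k _; ring
      rw [Finset.prod_congr rfl h1, Finset.prod_mul_distrib, Finset.prod_const, card_range,
        FZaux.prodA (by omega) hq]
    have hden2 : ∏ k ∈ range m, ((a : ℂ) * (Q m ^ 2) ^ (k + 1) - 1)
        = ∏ k ∈ range m, ((a : ℂ) * (Q m ^ 2) ^ k - 1) := by
      have h1 := Finset.prod_range_succ' (fun k => (a : ℂ) * (Q m ^ 2) ^ k - 1) m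
      have h2 := Finset.prod_range_succ (fun k => (a : ℂ) * (Q m ^ 2) ^ k - 1) m
      rw [h2] at h1
      rw [show (Q m ^ 2) ^ m = (Q m ^ 2) ^ 0 by rw [hq.pow_eq_one, pow_zero]] at h1
      have h0 : (a : ℂ) * (Q m ^ 2) ^ 0 - 1 ≠ 0 := hK 0
      exact (mul_right_cancel₀ h0 h1).symm
    have hden : ∏ k ∈ range m, ((a : ℂ) * (Q m ^ 2) ^ k - 1) = (-1) ^ m * (1 - (a : ℂ) ^ m) := by
      have h1 : ∀ k ∈ range m, ((a : ℂ) * (Q m ^ 2) ^ k - 1)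
          = (-(a : ℂ)) * (((a : ℂ))⁻¹ - (Q m ^ 2) ^ k) := by
        intro k _; field_simp; ring
      rw [Finset.prod_congr rfl h1, Finset.prod_mul_distrib, Finset.prod_const, card_range,
        FZaux.prodA (by omega) hq, neg_pow]
      rw [mul_assoc, mul_sub, ← mul_pow, mul_inv_cancel₀ ha0', one_pow]
      ring
    rw [hnum, hden2, hden, hζm]
    have hne : ((-1 : ℂ)) ^ m ≠ 0 := pow_ne_zero _ (by norm_num)
    field_simp
    ring
  have hXper : ∀ p : ℕ, ∏ k ∈ range (p + m), H k = ∏ k ∈ range p, H k := by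
    intro p
    rw [show p + m = m + p by omega, Finset.prod_range_add, hXmm, one_mul]
    apply Finset.prod_congr rfl
    intro i _
    rw [show m + i = i + m by omega]
    exact hHper i
  have hmod : ∀ n ∈ range m, X m ((n + j) % m) (1 / (a : ℂ)) = ∏ k ∈ range (n + j), H k := by
    intro n hn
    rw [hX2 ((n + j) % m)]
    by_cases h : n + j < m
    · rw [Nat.mod_eq_of_lt h]
    · have hnm := mem_range.mp hn
      have hmod2 : (n + j) % m = n + j - m := by
        rw [Nat.mod_eq_sub_mod (by omega), Nat.mod_eq_of_lt (by omega)]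
      rw [hmod2, ← hXper (n + j - m), show n + j - m + m = n + j by omega]
  -- the per-term closed form
  have key : ∀ n ∈ range m, X m n (a : ℂ) * X m ((n + j) % m) (1 / (a : ℂ))
      = (-(Q m ^ j) * ((a : ℂ) - 1) ^ 2) *
        (((Q m ^ 2) ^ n * ∏ i ∈ range (j - 1), ((Q m ^ 2) ^ (i + 1) * (Q m ^ 2) ^ n - (a : ℂ))) /
          ∏ i ∈ range (j + 1), ((a : ℂ) * (Q m ^ 2) ^ i * (Q m ^ 2) ^ n - 1)) := by
    intro n hn
    rw [hX1 n, hmod n hn, hHdef]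
    rw [Finset.prod_div_distrib, Finset.prod_mul_distrib, Finset.prod_const, card_range]
    rw [Finset.prod_div_distrib, Finset.prod_mul_distrib, Finset.prod_const, card_range]
    have hAn : ∏ k ∈ range (n + j), ((Q m ^ 2) ^ k - (a : ℂ))
        = ((∏ k ∈ range n, ((Q m ^ 2) ^ (k + 1) - (a : ℂ))) *
            ∏ i ∈ range (j - 1), ((Q m ^ 2) ^ (i + 1) * (Q m ^ 2) ^ n - (a : ℂ))) *
          (1 - (a : ℂ)) := by
      rw [show n + j = (n + (j - 1)) + 1 by omega, Finset.prod_range_succ',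
        Finset.prod_range_add, pow_zero]
      congr 1
      congr 1
      apply Finset.prod_congr rfl
      intro i _
      rw [show n + i + 1 = (i + 1) + n by omega, pow_add]
    have hBn : (∏ k ∈ range (n + j), ((a : ℂ) * (Q m ^ 2) ^ (k + 1) - 1)) * ((a : ℂ) - 1)
        = (∏ k ∈ range n, ((a : ℂ) * (Q m ^ 2) ^ k - 1)) *
          ∏ i ∈ range (j + 1), ((a : ℂ) * (Q m ^ 2) ^ i * (Q m ^ 2) ^ n - 1) := by
      have h1 := Finset.prod_range_succ' (fun k => (a : ℂ) * (Q m ^ 2) ^ k - 1) (n + j)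
      rw [show n + j + 1 = n + (j + 1) by omega, Finset.prod_range_add] at h1
      simp only [pow_zero, mul_one] at h1
      rw [← h1]
      congr 1
      apply Finset.prod_congr rfl
      intro i _
      rw [show n + i = i + n by omega, pow_add]
      ring
    have hPn : ∏ k ∈ range n, ((a : ℂ) * (Q m ^ 2) ^ k - 1) ≠ 0 :=
      Finset.prod_ne_zero_iff.mpr (fun k _ => hK k)
    have hQn : ∏ k ∈ range n, ((Q m ^ 2) ^ (k + 1) - (a : ℂ)) ≠ 0 :=
      Finset.prod_ne_zero_iff.mpr (fun k _ => hK' (k + 1))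
    have hBn0 : ∏ k ∈ range (n + j), ((a : ℂ) * (Q m ^ 2) ^ (k + 1) - 1) ≠ 0 :=
      Finset.prod_ne_zero_iff.mpr (fun k _ => hK (k + 1))
    have hDn : ∏ i ∈ range (j + 1), ((a : ℂ) * (Q m ^ 2) ^ i * (Q m ^ 2) ^ n - 1) ≠ 0 := by
      rw [Finset.prod_ne_zero_iff]
      intro i _
      rw [show (a : ℂ) * (Q m ^ 2) ^ i * (Q m ^ 2) ^ n = (a : ℂ) * (Q m ^ 2) ^ (i + n) by
        rw [pow_add]; ring]
      exact hK (i + n)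
    have hpow : Q m ^ n * Q m ^ (n + j) = (Q m ^ 2) ^ n * Q m ^ j := by
      rw [← pow_add, ← pow_mul, ← pow_add]
      congr 1
      omega
    rw [hAn]
    have hBn' : ∏ k ∈ range (n + j), ((a : ℂ) * (Q m ^ 2) ^ (k + 1) - 1)
        = (∏ k ∈ range n, ((a : ℂ) * (Q m ^ 2) ^ k - 1)) *
          (∏ i ∈ range (j + 1), ((a : ℂ) * (Q m ^ 2) ^ i * (Q m ^ 2) ^ n - 1)) / ((a : ℂ) - 1) := by
      rw [eq_div_iff haM1]
      exact hBn
    rw [hBn']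
    generalize ∏ i ∈ range (j + 1), ((a : ℂ) * (Q m ^ 2) ^ i * (Q m ^ 2) ^ n - 1) = D at hDn ⊢
    generalize ∏ i ∈ range (j - 1), ((Q m ^ 2) ^ (i + 1) * (Q m ^ 2) ^ n - (a : ℂ)) = P1
    generalize ∏ k ∈ range n, ((a : ℂ) * (Q m ^ 2) ^ k - 1) = P2 at hPn ⊢
    generalize ∏ k ∈ range n, ((Q m ^ 2) ^ (k + 1) - (a : ℂ)) = P3 at hQn ⊢
    field_simp
    linear_combination (Q m ^ j * (a : ℂ) ^ 2 - 2 * Q m ^ j * (a : ℂ) + Q m ^ j) *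
      P2 * P3 * P1 * D * hpow
  rw [Finset.sum_congr rfl key, ← Finset.mul_sum,
    FZaux.auxSum m j (by omega) hj1 hjm (Q m ^ 2) (a : ℂ) hq ha0' hK ham, mul_zero]
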